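/- Let S be the numerical semigroup generated by 2 and 7. Then for every integer k ≥ 0, min over i+j=k (i,j ≥ 0) of (#(S ∩ [0,i)) + #(S ∩ [0,j))) equals ⌊(k+1)/2⌋ if k ≤ 12 and k - 6 if k ≥ 12. -/
import Mathlib

open scoped Classical in
lemma card_S_2_7 (i : ℕ) :
    ((Finset.range i).filter (fun n => ∃ a b : ℕ, n = 2 * a + 7 * b)).card
      = i - min (i / 2) 3 := by
  induction i with
  | zero => simp
  | succ n ih =>
    rw [Finset.range_add_one, Finset.filter_insert]
    by_cases h : ∃ a b : ℕ, n = 2 * a + 7 * b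
    · rw [if_pos h, Finset.card_insert_of_notMem (by simp), ih]
      obtain ⟨a, b, hab⟩ := h
      have h2 : n % 2 = 0 ∨ 7 ≤ n := by rcases b with _ | b' <;> omega
      omega
    · rw [if_neg h, ih]
      have : n = 1 ∨ n = 3 ∨ n = 5 := by
        by_contra hc
        apply h
        push_neg at hc
        rcases Nat.even_or_odd n with he | ho
        · obtain ⟨m, hm⟩ := he
          exact ⟨m, 0, by omega⟩
        · obtain ⟨m, hm⟩ := ho
          exact ⟨(n - 7) / 2, 1, by omega⟩
      omega

open scoped Classical in
theorem min_convolution_2_7_and_2_7 (k : ℕ) :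
    (Finset.range (k + 1)).inf'
        (Finset.nonempty_range_iff.mpr (Nat.succ_ne_zero k))
        (fun i =>
          ((Finset.range i).filter (fun n => ∃ a b : ℕ, n = 2 * a + 7 * b)).card +
          ((Finset.range (k - i)).filter (fun n => ∃ a b : ℕ, n = 2 * a + 7 * b)).card)
      = if k ≤ 12 then (k + 1) / 2 else k - 6 := by
  simp only [card_S_2_7]
  apply le_antisymm
  · have hmem : min 6 (2 * (k / 2)) ∈ Finset.range (k + 1) := by
      simp only [Finset.mem_range]; omega
    refine le_trans (Finset.inf'_le _ hmem) ?_
    split <;> omega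
  · apply Finset.le_inf'
    intro i hi
    simp only [Finset.mem_range] at hi
    split <;> omega
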